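/- Suboptimality bound via the polar: let ℓ(Y,X,Q) be jointly convex in (X,Q), differentiable in X, with strong convexity constants m_X ≥ 0 in X and m_Q ≥ 0 in Q, and let (Ũ,Ṽ,Q̃) satisfy 0 ∈ ∂_Q ℓ(Y,ŨṼᵀ,Q̃) and ⟨−∇_X ℓ(Y,ŨṼᵀ,Q̃), ŨṼᵀ⟩ = λ∑_i θ(Ũ_i,Ṽ_i). Then f(Ũ,Ṽ,Q̃) − F(X̂,Q̂) ≤ λΩ_θ(X̂)[Ω_θ°(−(1/λ)∇_X ℓ(Y,ŨṼᵀ,Q̃)) − 1] − (m_X/2)‖ŨṼᵀ − X̂‖_F² − (m_Q/2)‖Q̃ − Q̂‖_F², where (X̂,Q̂) is any global minimizer of F(X,Q) = ℓ(Y,X,Q) + λΩ_θ(X). -/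

import Mathlib

open Matrix Filter
open scoped ENNReal BigOperators

/-- The matrix factorization regularizer: infimum over all factorizations `X = U * Vᵀ`
(with a variable number `r` of columns) of the sum of `θ` applied to column pairs. -/
noncomputable def Omega {D N : ℕ} (θ : (Fin D → ℝ) → (Fin N → ℝ) → ℝ≥0∞)
    (X : Matrix (Fin D) (Fin N) ℝ) : ℝ≥0∞ :=
  ⨅ (r : ℕ) (U : Matrix (Fin D) (Fin r) ℝ) (V : Matrix (Fin N) (Fin r) ℝ)
    (_ : U * Vᵀ = X), ∑ i : Fin r, θ (fun d => U d i) (fun n => V n i)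

/-- `θ` is a rank-1 regularizer: positively homogeneous of degree 2, `θ(0,0) = 0`
(nonnegativity is automatic in `ℝ≥0∞`), and `θ(uₙ,vₙ) → ∞` whenever `‖uₙvₙᵀ‖_F → ∞`. -/
def IsRankOneReg {D N : ℕ} (θ : (Fin D → ℝ) → (Fin N → ℝ) → ℝ≥0∞) : Prop :=
  (∀ (α : ℝ), 0 ≤ α → ∀ u v, θ (α • u) (α • v) = ENNReal.ofReal (α ^ 2) * θ u v) ∧
  (θ 0 0 = 0) ∧
  (∀ (u : ℕ → Fin D → ℝ) (v : ℕ → Fin N → ℝ),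
    Tendsto (fun k => Real.sqrt (∑ d, ∑ m, (u k d * v k m) ^ 2)) atTop atTop →
    Tendsto (fun k => θ (u k) (v k)) atTop (nhds ⊤))

/-- The Frobenius (trace) inner product on matrices. -/
noncomputable def frobInner {D N : ℕ} (A B : Matrix (Fin D) (Fin N) ℝ) : ℝ :=
  ∑ d, ∑ n, A d n * B d n

/-- Suboptimality bound via the polar: if `(Ũ,Ṽ,Q̃)` satisfies `0 ∈ ∂_Q ℓ` and the
alignment condition `⟨−∇_Xℓ, ŨṼᵀ⟩ = λ∑ᵢθ(Ũᵢ,Ṽᵢ)`, then the objective gap to a global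
minimizer `(X̂,Q̂)` of `F` is bounded by
`λΩ_θ(X̂)[Ω_θ°(−(1/λ)∇_Xℓ) − 1] − (m_X/2)‖ŨṼᵀ−X̂‖² − (m_Q/2)‖Q̃−Q̂‖²`. -/
lemma sqrt_scale {D N : ℕ} (u : Fin D → ℝ) (v : Fin N → ℝ) (α : ℝ) :
    Real.sqrt (∑ d, ∑ m, ((α • u) d * ((α • v) m)) ^ 2)
      = α ^ 2 * Real.sqrt (∑ d, ∑ m, (u d * v m) ^ 2) := by
  have h : ∑ d, ∑ m, ((α • u) d * ((α • v) m)) ^ 2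
      = (α ^ 2) ^ 2 * ∑ d, ∑ m, (u d * v m) ^ 2 := by
    simp only [Pi.smul_apply, smul_eq_mul, Finset.mul_sum]
    refine Finset.sum_congr rfl fun d _ => Finset.sum_congr rfl fun m _ => by ring
  rw [h, Real.sqrt_mul (sq_nonneg _), Real.sqrt_sq (sq_nonneg _)]

lemma exists_bound {D N : ℕ} (θ : (Fin D → ℝ) → (Fin N → ℝ) → ℝ≥0∞) (hθ : IsRankOneReg θ) :
    ∃ C : ℝ, 0 ≤ C ∧ ∀ u v, θ u v ≤ 1 → Real.sqrt (∑ d, ∑ m, (u d * v m) ^ 2) ≤ C := by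
  by_contra h
  push_neg at h
  have h' : ∀ k : ℕ, ∃ u v, θ u v ≤ 1 ∧ (k : ℝ) < Real.sqrt (∑ d, ∑ m, (u d * v m) ^ 2) := by
    intro k
    obtain ⟨u, v, h1, h2⟩ := h k (Nat.cast_nonneg k)
    exact ⟨u, v, h1, h2⟩
  choose u v h1 h2 using h'
  have htend : Tendsto (fun k => Real.sqrt (∑ d, ∑ m, (u k d * v k m) ^ 2)) atTop atTop :=
    tendsto_atTop_mono (fun k => (h2 k).le) tendsto_natCast_atTop_atTop
  have := hθ.2.2 u v htend
  have hev : ∀ᶠ k in atTop, (1 : ℝ≥0∞) < θ (u k) (v k) :=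
    this.eventually (eventually_gt_nhds (by norm_num))
  obtain ⟨k, hk⟩ := hev.exists
  exact absurd (h1 k) (not_le.mpr hk)

lemma norm_le_bound {D N : ℕ} (θ : (Fin D → ℝ) → (Fin N → ℝ) → ℝ≥0∞) (hθ : IsRankOneReg θ)
    (C : ℝ) (hC : ∀ u v, θ u v ≤ 1 → Real.sqrt (∑ d, ∑ m, (u d * v m) ^ 2) ≤ C) :
    ∀ u v, θ u v ≠ ⊤ → Real.sqrt (∑ d, ∑ m, (u d * v m) ^ 2) ≤ C * (θ u v).toReal := by
  intro u v hne
  rcases eq_or_ne (θ u v) 0 with h0 | hpos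
  · -- show sqrt = 0
    have key : ∀ α : ℝ, 0 ≤ α → α ^ 2 * Real.sqrt (∑ d, ∑ m, (u d * v m) ^ 2) ≤ C := by
      intro α hα
      have := hC (α • u) (α • v) (by rw [hθ.1 α hα u v, h0, mul_zero]; exact zero_le)
      rwa [sqrt_scale] at this
    have hs : Real.sqrt (∑ d, ∑ m, (u d * v m) ^ 2) = 0 := by
      by_contra hne0
      have hspos : 0 < Real.sqrt (∑ d, ∑ m, (u d * v m) ^ 2) :=
        lt_of_le_of_ne (Real.sqrt_nonneg _) (Ne.symm hne0)
      set s := Real.sqrt (∑ d, ∑ m, (u d * v m) ^ 2)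
      have hbig := key (Real.sqrt ((|C| + 1) / s)) (Real.sqrt_nonneg _)
      rw [Real.sq_sqrt (by positivity)] at hbig
      rw [div_mul_cancel₀ _ (ne_of_gt hspos)] at hbig
      have : C ≤ |C| := le_abs_self C
      linarith
    rw [hs, h0]
    simp
  · have ht : 0 < (θ u v).toReal := ENNReal.toReal_pos hpos hne
    set t := (θ u v).toReal with hts
    have hα : (0:ℝ) ≤ 1 / Real.sqrt t := by positivity
    have hsq : (1 / Real.sqrt t) ^ 2 = 1 / t := by
      rw [div_pow, one_pow, Real.sq_sqrt ht.le]
    have hone : θ ((1 / Real.sqrt t) • u) ((1 / Real.sqrt t) • v) ≤ 1 := by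
      rw [hθ.1 _ hα u v, hsq]
      have : θ u v = ENNReal.ofReal t := (ENNReal.ofReal_toReal hne).symm
      rw [this, ← ENNReal.ofReal_mul (by positivity), one_div_mul_cancel (ne_of_gt ht)]
      simp
    have := hC _ _ hone
    rw [sqrt_scale, hsq] at this
    calc Real.sqrt (∑ d, ∑ m, (u d * v m) ^ 2)
        = t * (1 / t * Real.sqrt (∑ d, ∑ m, (u d * v m) ^ 2)) := by
          field_simp
      _ ≤ t * C := by
          exact mul_le_mul_of_nonneg_left this ht.le
      _ = C * t := mul_comm _ _

lemma entry_le_sqrt {D N : ℕ} (u : Fin D → ℝ) (v : Fin N → ℝ) (d : Fin D) (m : Fin N) :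
    |u d * v m| ≤ Real.sqrt (∑ d, ∑ m, (u d * v m) ^ 2) := by
  rw [← Real.sqrt_sq_eq_abs]
  apply Real.sqrt_le_sqrt
  calc (u d * v m) ^ 2 ≤ ∑ m', (u d * v m') ^ 2 := by
        exact Finset.single_le_sum (f := fun m' => (u d * v m') ^ 2)
          (fun i _ => sq_nonneg _) (Finset.mem_univ m)
    _ ≤ ∑ d', ∑ m', (u d' * v m') ^ 2 := by
        exact Finset.single_le_sum (f := fun d' => ∑ m', (u d' * v m') ^ 2)
          (fun i _ => Finset.sum_nonneg fun _ _ => sq_nonneg _) (Finset.mem_univ d)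

lemma mul_transpose_eq_sum {D N r : ℕ} (U : Matrix (Fin D) (Fin r) ℝ)
    (V : Matrix (Fin N) (Fin r) ℝ) :
    U * Vᵀ = ∑ i : Fin r, vecMulVec (fun d => U d i) (fun n => V n i) := by
  ext d n
  simp [Matrix.mul_apply, vecMulVec_apply, Matrix.sum_apply, Matrix.transpose_apply]

lemma vecMulVec_smul_smul {D N : ℕ} (u : Fin D → ℝ) (v : Fin N → ℝ) (α : ℝ) :
    vecMulVec (α • u) (α • v) = (α ^ 2) • vecMulVec u v := by
  ext d n
  simp [vecMulVec_apply]
  ring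

lemma Omega_zero {D N : ℕ} (θ : (Fin D → ℝ) → (Fin N → ℝ) → ℝ≥0∞) :
    Omega θ (0 : Matrix (Fin D) (Fin N) ℝ) = 0 := by
  refine le_antisymm ?_ zero_le
  have hpf : (0 : Matrix (Fin D) (Fin 0) ℝ) * (0 : Matrix (Fin N) (Fin 0) ℝ)ᵀ = 0 := by
    ext d n; simp [Matrix.mul_apply]
  refine iInf_le_of_le 0 (iInf_le_of_le 0 (iInf_le_of_le 0 (iInf_le_of_le hpf ?_)))
  simp

lemma Omega_lt {D N : ℕ} (θ : (Fin D → ℝ) → (Fin N → ℝ) → ℝ≥0∞)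
    (X : Matrix (Fin D) (Fin N) ℝ) {c : ℝ≥0∞} (hc : Omega θ X < c) :
    ∃ (r : ℕ) (U : Matrix (Fin D) (Fin r) ℝ) (V : Matrix (Fin N) (Fin r) ℝ),
      U * Vᵀ = X ∧ (∑ i : Fin r, θ (fun d => U d i) (fun n => V n i)) < c := by
  rw [Omega] at hc
  simp only [iInf_lt_iff] at hc
  obtain ⟨r, U, V, hUV, hsum⟩ := hc
  exact ⟨r, U, V, hUV, hsum⟩

lemma ennreal_coe_ereal {x : ℝ≥0∞} (hx : x ≠ ⊤) :
    ((x : EReal)) = ((x.toReal : ℝ) : EReal) := by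
  rw [← EReal.coe_toReal (x := (x : EReal)) (by simpa [EReal.coe_ennreal_eq_top_iff] using hx)
    (EReal.coe_ennreal_ne_bot x), EReal.toReal_coe_ennreal]

theorem suboptimality_polar_bound {D N P r : ℕ}
    (θ : (Fin D → ℝ) → (Fin N → ℝ) → ℝ≥0∞) (hθ : IsRankOneReg θ)
    (ℓ : (Fin D → Fin N → ℝ) → (Fin P → ℝ) → ℝ)
    (hconv : ConvexOn ℝ Set.univ (fun p : (Fin D → Fin N → ℝ) × (Fin P → ℝ) => ℓ p.1 p.2))
    (hdiff : ∀ Q : Fin P → ℝ, Differentiable ℝ (fun X : Fin D → Fin N → ℝ => ℓ X Q))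
    (lam : ℝ) (hlam : 0 < lam) (mX mQ : ℝ) (hmX : 0 ≤ mX) (hmQ : 0 ≤ mQ)
    -- strong convexity of ℓ with constants mX (in X) and mQ (in Q):
    (hstrong : ∀ (X₁ X₂ : Matrix (Fin D) (Fin N) ℝ) (Q₁ Q₂ : Fin P → ℝ) (W : Fin P → ℝ),
      (∀ Q' : Fin P → ℝ, ℓ X₁ Q₁ + ∑ p, W p * (Q' p - Q₁ p) ≤ ℓ X₁ Q') →
      ℓ X₁ Q₁ + fderiv ℝ (fun X : Fin D → Fin N → ℝ => ℓ X Q₁) X₁ (X₂ - X₁)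
          + (∑ p, W p * (Q₂ p - Q₁ p))
          + (mX / 2) * (∑ d, ∑ n, (X₁ d n - X₂ d n) ^ 2)
          + (mQ / 2) * (∑ p, (Q₁ p - Q₂ p) ^ 2) ≤ ℓ X₂ Q₂)
    (Ut : Matrix (Fin D) (Fin r) ℝ) (Vt : Matrix (Fin N) (Fin r) ℝ) (Qt : Fin P → ℝ)
    -- condition (1): 0 ∈ ∂_Q ℓ(Y, ŨṼᵀ, Q̃)
    (h1 : ∀ Q : Fin P → ℝ, ℓ (Ut * Vtᵀ) Qt ≤ ℓ (Ut * Vtᵀ) Q)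
    -- condition (2): ⟨−∇_X ℓ, ŨṼᵀ⟩ = λ ∑ᵢ θ(Ũᵢ,Ṽᵢ)
    (h2 : ((-(fderiv ℝ (fun X : Fin D → Fin N → ℝ => ℓ X Qt) (Ut * Vtᵀ)
            ((Ut * Vtᵀ : Matrix (Fin D) (Fin N) ℝ) : Fin D → Fin N → ℝ)) : ℝ) : EReal)
      = ((ENNReal.ofReal lam * ∑ i : Fin r, θ (fun d => Ut d i) (fun n => Vt n i) : ℝ≥0∞) : EReal))
    (Xh : Matrix (Fin D) (Fin N) ℝ) (Qh : Fin P → ℝ)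
    -- (X̂,Q̂) is a global minimizer of F(X,Q) = ℓ(Y,X,Q) + λΩ_θ(X)
    (hglob : ∀ (X : Matrix (Fin D) (Fin N) ℝ) (Q : Fin P → ℝ),
      ((ℓ Xh Qh : ℝ) : EReal) + ((ENNReal.ofReal lam * Omega θ Xh : ℝ≥0∞) : EReal)
        ≤ ((ℓ X Q : ℝ) : EReal) + ((ENNReal.ofReal lam * Omega θ X : ℝ≥0∞) : EReal)) :
    (((ℓ (Ut * Vtᵀ) Qt : ℝ) : EReal) +
        ((ENNReal.ofReal lam * ∑ i : Fin r, θ (fun d => Ut d i) (fun n => Vt n i) : ℝ≥0∞) : EReal))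
      - (((ℓ Xh Qh : ℝ) : EReal) + ((ENNReal.ofReal lam * Omega θ Xh : ℝ≥0∞) : EReal))
    ≤ ((ENNReal.ofReal lam * Omega θ Xh : ℝ≥0∞) : EReal) *
        (((⨆ (u : Fin D → ℝ) (v : Fin N → ℝ) (_ : θ u v ≤ 1),
            ENNReal.ofReal ((-(1 / lam)) * fderiv ℝ (fun X : Fin D → Fin N → ℝ => ℓ X Qt)
              (Ut * Vtᵀ) (vecMulVec u v)) : ℝ≥0∞) : EReal) - 1)
      - (((mX / 2) * (∑ d, ∑ n, ((Ut * Vtᵀ : Matrix (Fin D) (Fin N) ℝ) d n - Xh d n) ^ 2) : ℝ) : EReal)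
      - (((mQ / 2) * (∑ p, (Qt p - Qh p) ^ 2) : ℝ) : EReal) := by

  classical
  obtain ⟨C, hC0, hC⟩ := exists_bound θ hθ
  have hnle := norm_le_bound θ hθ C hC
  set g := fderiv ℝ (fun X : Fin D → Fin N → ℝ => ℓ X Qt) (Ut * Vtᵀ) with hg
  set S : ℝ≥0∞ := ∑ i : Fin r, θ (fun d => Ut d i) (fun n => Vt n i) with hSdef
  -- λ·S is finite
  have hlamS_ne : ENNReal.ofReal lam * S ≠ ⊤ := by
    intro htop
    rw [htop] at h2
    simp at h2
  have hofl : ENNReal.ofReal lam ≠ 0 := by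
    simp only [ne_eq, ENNReal.ofReal_eq_zero, not_le]; exact hlam
  have hS_ne : S ≠ ⊤ := by
    intro h
    exact hlamS_ne (by rw [h, ENNReal.mul_top hofl])
  -- alignment condition as a real equation
  have hgt : -(g ((Ut * Vtᵀ : Matrix (Fin D) (Fin N) ℝ) : Fin D → Fin N → ℝ))
      = lam * S.toReal := by
    rw [ennreal_coe_ereal hlamS_ne] at h2
    have := EReal.coe_eq_coe_iff.mp h2
    rwa [ENNReal.toReal_mul, ENNReal.toReal_ofReal hlam.le] at this
  -- Ω(Xh) is finite
  have hΩ_ne : Omega θ Xh ≠ ⊤ := by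
    intro htop
    have h0 := hglob 0 Qh
    rw [Omega_zero, mul_zero, htop, ENNReal.mul_top hofl] at h0
    simp at h0
  have hlamΩ_ne : ENNReal.ofReal lam * Omega θ Xh ≠ ⊤ :=
    ENNReal.mul_ne_top ENNReal.ofReal_ne_top hΩ_ne
  -- strong convexity instance
  have hsc := hstrong (Ut * Vtᵀ) Xh Qt Qh 0 (fun Q' => by simpa using h1 Q')
  simp only [Pi.zero_apply, zero_mul, Finset.sum_const_zero, add_zero] at hsc
  have hsub : g ((Xh - Ut * Vtᵀ : Matrix (Fin D) (Fin N) ℝ) : Fin D → Fin N → ℝ)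
      = g Xh - g ((Ut * Vtᵀ : Matrix (Fin D) (Fin N) ℝ) : Fin D → Fin N → ℝ) :=
    map_sub g _ _
  rw [hsub] at hsc
  -- the polar value
  set b : ℝ≥0∞ := ⨆ (u : Fin D → ℝ) (v : Fin N → ℝ) (_ : θ u v ≤ 1),
      ENNReal.ofReal ((-(1 / lam)) * g (vecMulVec u v)) with hb
  -- per-column polar bound
  have hcol : ∀ (u : Fin D → ℝ) (v : Fin N → ℝ), θ u v ≠ ⊤ → b ≠ ⊤ →
      -(g (vecMulVec u v)) ≤ lam * b.toReal * (θ u v).toReal := by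
    intro u v hne hbne
    rcases eq_or_ne (θ u v) 0 with h0 | hpos
    · have hz : vecMulVec u v = (0 : Matrix (Fin D) (Fin N) ℝ) := by
        have hsqrt := hnle u v hne
        rw [h0] at hsqrt
        simp only [ENNReal.toReal_zero, mul_zero] at hsqrt
        ext d n
        have := entry_le_sqrt u v d n
        have habs : |u d * v n| ≤ 0 := le_trans this hsqrt
        rw [vecMulVec_apply]
        simpa using le_antisymm habs (abs_nonneg _)
      rw [hz, h0]
      have : g ((0 : Matrix (Fin D) (Fin N) ℝ) : Fin D → Fin N → ℝ) = 0 := map_zero g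
      rw [this]
      simp
    · have ht : 0 < (θ u v).toReal := ENNReal.toReal_pos hpos hne
      set t := (θ u v).toReal with hts
      have hα : (0:ℝ) ≤ 1 / Real.sqrt t := by positivity
      have hsq : (1 / Real.sqrt t) ^ 2 = 1 / t := by
        rw [div_pow, one_pow, Real.sq_sqrt ht.le]
      have hone : θ ((1 / Real.sqrt t) • u) ((1 / Real.sqrt t) • v) ≤ 1 := by
        rw [hθ.1 _ hα u v, hsq]
        have hθt : θ u v = ENNReal.ofReal t := (ENNReal.ofReal_toReal hne).symm
        rw [hθt, ← ENNReal.ofReal_mul (by positivity), one_div_mul_cancel (ne_of_gt ht)]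
        simp
      have hle : ENNReal.ofReal ((-(1 / lam)) *
          g (vecMulVec ((1 / Real.sqrt t) • u) ((1 / Real.sqrt t) • v))) ≤ b := by
        rw [hb]
        exact le_iSup_of_le _ (le_iSup_of_le _ (le_iSup_of_le hone le_rfl))
      have hsmul : g (vecMulVec ((1 / Real.sqrt t) • u) ((1 / Real.sqrt t) • v))
          = (1 / t) * g (vecMulVec u v) := by
        rw [vecMulVec_smul_smul, hsq]
        have := map_smul g (1 / t) ((vecMulVec u v : Matrix (Fin D) (Fin N) ℝ) :
          Fin D → Fin N → ℝ)
        rw [smul_eq_mul] at this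
        exact this
      rw [hsmul] at hle
      have hreal : (-(1 / lam)) * ((1 / t) * g (vecMulVec u v)) ≤ b.toReal :=
        (ENNReal.ofReal_le_iff_le_toReal hbne).mp hle
      have hb0 : 0 ≤ b.toReal := ENNReal.toReal_nonneg
      have h1t : (0:ℝ) < 1 / t := by positivity
      have hmul := mul_le_mul_of_nonneg_left hreal (mul_pos hlam ht).le
      have hid : lam * t * ((-(1 / lam)) * ((1 / t) * g (vecMulVec u v)))
          = -(g (vecMulVec u v)) := by
        field_simp
      rw [hid] at hmul
      calc -(g (vecMulVec u v)) ≤ lam * t * b.toReal := hmul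
        _ = lam * b.toReal * t := by ring
  -- Ω(Xh) = 0 implies Xh = 0
  have hXh0 : Omega θ Xh = 0 → (Xh : Fin D → Fin N → ℝ) = 0 := by
    intro h0
    funext d n
    have key : ∀ ε : ℝ, 0 < ε → |Xh d n| ≤ C * ε := by
      intro ε hε
      have hlt : Omega θ Xh < ENNReal.ofReal ε := by
        rw [h0]; exact ENNReal.ofReal_pos.mpr hε
      obtain ⟨r', U, V, hUV, hsum⟩ := Omega_lt θ Xh hlt
      have hfin : (∑ i : Fin r', θ (fun d => U d i) (fun n => V n i)) ≠ ⊤ :=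
        ne_top_of_lt hsum
      have hfinI : ∀ i : Fin r', θ (fun d => U d i) (fun n => V n i) ≠ ⊤ := fun i =>
        ne_top_of_le_ne_top hfin (Finset.single_le_sum
          (f := fun i => θ (fun d => U d i) (fun n => V n i))
          (fun _ _ => zero_le) (Finset.mem_univ i))
      have hXdn : Xh d n = ∑ i : Fin r', U d i * V n i := by
        rw [← hUV]; simp [Matrix.mul_apply, Matrix.transpose_apply]
      calc |Xh d n| = |∑ i : Fin r', U d i * V n i| := by rw [hXdn]
        _ ≤ ∑ i : Fin r', |U d i * V n i| := Finset.abs_sum_le_sum_abs _ _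
        _ ≤ ∑ i : Fin r', C * (θ (fun d => U d i) (fun n => V n i)).toReal := by
            refine Finset.sum_le_sum fun i _ => ?_
            exact le_trans (entry_le_sqrt (fun d => U d i) (fun n => V n i) d n)
              (hnle (fun d => U d i) (fun n => V n i) (hfinI i))
        _ = C * ∑ i : Fin r', (θ (fun d => U d i) (fun n => V n i)).toReal := by
            rw [Finset.mul_sum]
        _ = C * (∑ i : Fin r', θ (fun d => U d i) (fun n => V n i)).toReal := by
            rw [ENNReal.toReal_sum (fun i _ => hfinI i)]
        _ ≤ C * ε := by
            refine mul_le_mul_of_nonneg_left ?_ hC0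
            have := ENNReal.toReal_mono ENNReal.ofReal_ne_top hsum.le
            rwa [ENNReal.toReal_ofReal hε.le] at this
    have : |Xh d n| ≤ 0 := by
      refine le_of_forall_pos_le_add (fun ε hε => ?_)
      have hδ : (0:ℝ) < ε / (C + 1) := by positivity
      calc |Xh d n| ≤ C * (ε / (C + 1)) := key _ hδ
        _ ≤ 0 + ε := by
            rw [zero_add]
            have e : C * (ε / (C + 1)) * (C + 1) = C * ε := by field_simp
            nlinarith [hε.le, hC0]
    simpa using le_antisymm this (abs_nonneg _)
  -- polar inequality when b is finite
  have hpolar : b ≠ ⊤ → -(g (Xh : Fin D → Fin N → ℝ))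
      ≤ lam * b.toReal * (Omega θ Xh).toReal := by
    intro hbne
    refine le_of_forall_pos_le_add (fun ε hε => ?_)
    set K := lam * b.toReal with hK
    have hK0 : 0 ≤ K := mul_nonneg hlam.le ENNReal.toReal_nonneg
    have hδ : (0:ℝ) < ε / (K + 1) := by positivity
    have hlt : Omega θ Xh < Omega θ Xh + ENNReal.ofReal (ε / (K + 1)) :=
      ENNReal.lt_add_right hΩ_ne (by simp only [ne_eq, ENNReal.ofReal_eq_zero, not_le]; exact hδ)
    obtain ⟨r', U, V, hUV, hsum⟩ := Omega_lt θ Xh hlt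
    have hfin : (∑ i : Fin r', θ (fun d => U d i) (fun n => V n i)) ≠ ⊤ :=
      ne_top_of_lt hsum
    have hfinI : ∀ i : Fin r', θ (fun d => U d i) (fun n => V n i) ≠ ⊤ := fun i =>
      ne_top_of_le_ne_top hfin (Finset.single_le_sum
        (f := fun i => θ (fun d => U d i) (fun n => V n i))
        (fun _ _ => zero_le) (Finset.mem_univ i))
    have hgsum : g (Xh : Fin D → Fin N → ℝ)
        = ∑ i : Fin r', g (vecMulVec (fun d => U d i) (fun n => V n i)) := by
      rw [← hUV, mul_transpose_eq_sum]
      exact map_sum g _ _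
    have hsum' : (∑ i : Fin r', θ (fun d => U d i) (fun n => V n i)).toReal
        ≤ (Omega θ Xh).toReal + ε / (K + 1) := by
      have := ENNReal.toReal_mono (by
        exact ENNReal.add_ne_top.mpr ⟨hΩ_ne, ENNReal.ofReal_ne_top⟩) hsum.le
      rwa [ENNReal.toReal_add hΩ_ne ENNReal.ofReal_ne_top,
        ENNReal.toReal_ofReal hδ.le] at this
    calc -(g (Xh : Fin D → Fin N → ℝ))
        = ∑ i : Fin r', -(g (vecMulVec (fun d => U d i) (fun n => V n i))) := by
          rw [hgsum, ← Finset.sum_neg_distrib]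
      _ ≤ ∑ i : Fin r', K * (θ (fun d => U d i) (fun n => V n i)).toReal :=
          Finset.sum_le_sum fun i _ => hcol _ _ (hfinI i) hbne
      _ = K * (∑ i : Fin r', θ (fun d => U d i) (fun n => V n i)).toReal := by
          rw [← Finset.mul_sum, ENNReal.toReal_sum (fun i _ => hfinI i)]
      _ ≤ K * ((Omega θ Xh).toReal + ε / (K + 1)) :=
          mul_le_mul_of_nonneg_left hsum' hK0
      _ ≤ K * (Omega θ Xh).toReal + ε := by
          have e : K * ((Omega θ Xh).toReal + ε / (K + 1)) * (K + 1)
              = K * (Omega θ Xh).toReal * (K + 1) + K * ε := by field_simp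
          nlinarith [hε.le, hK0, ENNReal.toReal_nonneg (a := Omega θ Xh)]
  -- rewrite the EReal coercions of finite ENNReal quantities as real coercions
  have e1 : ((ENNReal.ofReal lam * S : ℝ≥0∞) : EReal) = ((lam * S.toReal : ℝ) : EReal) := by
    rw [ennreal_coe_ereal hlamS_ne, ENNReal.toReal_mul, ENNReal.toReal_ofReal hlam.le]
  have e2 : ((ENNReal.ofReal lam * Omega θ Xh : ℝ≥0∞) : EReal)
      = ((lam * (Omega θ Xh).toReal : ℝ) : EReal) := by
    rw [ennreal_coe_ereal hlamΩ_ne, ENNReal.toReal_mul, ENNReal.toReal_ofReal hlam.le]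
  rw [e1, e2]
  rw [← EReal.coe_add, ← EReal.coe_add, ← EReal.coe_sub]
  rcases eq_or_ne b ⊤ with hbt | hbne
  · rcases eq_or_ne (Omega θ Xh) 0 with hΩ0 | hΩpos
    · have hXh := hXh0 hΩ0
      have hgXh : g (Xh : Fin D → Fin N → ℝ) = 0 := by rw [hXh]; exact map_zero g
      rw [hΩ0, hbt]
      simp only [ENNReal.toReal_zero, mul_zero, add_zero, EReal.coe_zero, zero_mul]
      rw [← @EReal.coe_zero, ← EReal.coe_sub, ← EReal.coe_sub, EReal.coe_le_coe_iff]
      rw [hgXh] at hsc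
      linarith [hsc, hgt]
    · rw [hbt]
      have hpos : 0 < lam * (Omega θ Xh).toReal :=
        mul_pos hlam (ENNReal.toReal_pos hΩpos hΩ_ne)
      rw [EReal.coe_ennreal_top]
      have h1 : (⊤ : EReal) - 1 = ⊤ := rfl
      have h2' : ((lam * (Omega θ Xh).toReal : ℝ) : EReal) * ((⊤ : EReal) - 1) = ⊤ := by
        rw [h1]; exact EReal.coe_mul_top_of_pos hpos
      rw [h2']
      rw [EReal.top_sub_coe, EReal.top_sub_coe]
      exact le_top
  · have hpol := hpolar hbne
    rw [ennreal_coe_ereal hbne]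
    rw [show ((1:EReal)) = ((1:ℝ) : EReal) from rfl, ← EReal.coe_sub, ← EReal.coe_mul,
      ← EReal.coe_sub, ← EReal.coe_sub, EReal.coe_le_coe_iff]
    have hexp : lam * (Omega θ Xh).toReal * (b.toReal - 1)
        = lam * b.toReal * (Omega θ Xh).toReal - lam * (Omega θ Xh).toReal := by ring
    linarith [hsc, hgt, hpol, hexp]
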